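/- Let X₁,…,Xₙ ∈ Sym⁺(p) with sample SR mean set E_SR = argmin over S ∈ Sym⁺(p) of ∑ d_SR²(X_i,S) and sample PSR mean set E_PSR = argmin over (U,D) ∈ M(p) of ∑ d_PSR²(X_i,(U,D)). If E_SR is nonempty and contained in the set of SPD matrices with distinct eigenvalues, then E_PSR = F⁻¹(E_SR) and F(E_PSR) = E_SR. -/

import Mathlib

open scoped BigOperators
open Matrix

namespace SR

variable {p : ℕ}

/-- Frobenius norm of a matrix. -/
noncomputable def frobNorm (A : Matrix (Fin p) (Fin p) ℝ) : ℝ :=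
  Real.sqrt (∑ i, ∑ j, (A i j) ^ 2)

/-- `U` is a special orthogonal (rotation) matrix. -/
def IsSO (U : Matrix (Fin p) (Fin p) ℝ) : Prop :=
  U * Uᵀ = 1 ∧ U.det = 1

/-- `D` is diagonal with positive diagonal entries. -/
def IsDiagPos (D : Matrix (Fin p) (Fin p) ℝ) : Prop :=
  D.IsDiag ∧ ∀ i, 0 < D i i

/-- `X` is symmetric positive definite. -/
def IsSPD (X : Matrix (Fin p) (Fin p) ℝ) : Prop :=
  X.IsSymm ∧ X.PosDef

/-- Membership in the eigen-decomposition space `M(p) = SO(p) × Diag⁺(p)`. -/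
def IsM (m : Matrix (Fin p) (Fin p) ℝ × Matrix (Fin p) (Fin p) ℝ) : Prop :=
  IsSO m.1 ∧ IsDiagPos m.2

/-- The eigen-composition map `F(U, D) = U D Uᵀ`. -/
def Fmap (m : Matrix (Fin p) (Fin p) ℝ × Matrix (Fin p) (Fin p) ℝ) :
    Matrix (Fin p) (Fin p) ℝ := m.1 * m.2 * m.1ᵀ

/-- `m = (U, D)` is an eigen-decomposition of `X`. -/
def IsEigenDecomp (X : Matrix (Fin p) (Fin p) ℝ)
    (m : Matrix (Fin p) (Fin p) ℝ × Matrix (Fin p) (Fin p) ℝ) : Prop :=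
  IsM m ∧ Fmap m = X

/-- Geodesic distance on `SO(p)`: `(1/√2)‖Log (U₂ U₁ᵀ)‖_F`, where `Log` denotes a
minimal-Frobenius-norm skew-symmetric logarithm. -/
noncomputable def dSO (U₁ U₂ : Matrix (Fin p) (Fin p) ℝ) : ℝ :=
  sInf {x : ℝ | ∃ A : Matrix (Fin p) (Fin p) ℝ, Aᵀ = -A ∧
    NormedSpace.exp A = U₂ * U₁ᵀ ∧ x = (1 / Real.sqrt 2) * frobNorm A}

/-- Geodesic distance on `Diag⁺(p)`: `‖Log D₁ − Log D₂‖_F`. -/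
noncomputable def dDiag (D₁ D₂ : Matrix (Fin p) (Fin p) ℝ) : ℝ :=
  Real.sqrt (∑ i, (Real.log (D₁ i i) - Real.log (D₂ i i)) ^ 2)

/-- Geodesic distance on `M(p)` with weight `k` on the rotation part. -/
noncomputable def dM (k : ℝ)
    (m₁ m₂ : Matrix (Fin p) (Fin p) ℝ × Matrix (Fin p) (Fin p) ℝ) : ℝ :=
  Real.sqrt (k * (dSO m₁.1 m₂.1) ^ 2 + (dDiag m₁.2 m₂.2) ^ 2)

/-- Scaling-rotation distance between SPD matrices. -/
noncomputable def dSR (k : ℝ) (X Y : Matrix (Fin p) (Fin p) ℝ) : ℝ :=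
  sInf {x : ℝ | ∃ mX mY, IsEigenDecomp X mX ∧ IsEigenDecomp Y mY ∧ x = dM k mX mY}

/-- Partial scaling-rotation distance. -/
noncomputable def dPSR (k : ℝ) (X : Matrix (Fin p) (Fin p) ℝ)
    (m : Matrix (Fin p) (Fin p) ℝ × Matrix (Fin p) (Fin p) ℝ) : ℝ :=
  sInf {x : ℝ | ∃ mX, IsEigenDecomp X mX ∧ x = dM k mX m}

/-- `P` is a signed permutation matrix. -/
def IsSignedPermMatrix (P : Matrix (Fin p) (Fin p) ℝ) : Prop :=
  ∃ (π : Equiv.Perm (Fin p)) (ε : Fin p → ℝ),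
    (∀ i, ε i = 1 ∨ ε i = -1) ∧ ∀ i j, P i j = ε i * (if i = π j then 1 else 0)

/-- `P` is an even signed permutation matrix (an element of `G(p)`). -/
def IsEvenSignedPerm (P : Matrix (Fin p) (Fin p) ℝ) : Prop :=
  IsSignedPermMatrix P ∧ P.det = 1

/-- `β_{G(p)}`: the minimal rotation distance from the identity to a nonidentity
even signed permutation matrix. -/
noncomputable def betaG (p : ℕ) : ℝ :=
  sInf {x : ℝ | ∃ h : Matrix (Fin p) (Fin p) ℝ, IsEvenSignedPerm h ∧ h ≠ 1 ∧ x = dSO 1 h}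

/-- `S` has a repeated eigenvalue (belongs to a lower stratum). -/
def HasRepeatedEig (S : Matrix (Fin p) (Fin p) ℝ) : Prop :=
  ∃ m, IsEigenDecomp S m ∧ ¬ Function.Injective (fun i => m.2 i i)

/-- `S` has `p` distinct eigenvalues (belongs to the top stratum). -/
def HasDistinctEigs (S : Matrix (Fin p) (Fin p) ℝ) : Prop :=
  ∃ m, IsEigenDecomp S m ∧ Function.Injective (fun i => m.2 i i)

/-- `δ(S)`: scaling-rotation distance from `S` to the lower strata. -/
noncomputable def deltaFun (k : ℝ) (S : Matrix (Fin p) (Fin p) ℝ) : ℝ :=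
  sInf {x : ℝ | ∃ S', IsSPD S' ∧ HasRepeatedEig S' ∧ x = dSR k S S'}

/-- Diameter of `SO(p)` in the rotation distance. -/
noncomputable def diamSO (p : ℕ) : ℝ :=
  sSup {x : ℝ | ∃ U V : Matrix (Fin p) (Fin p) ℝ, IsSO U ∧ IsSO V ∧ x = dSO U V}

variable {n : ℕ}

/-- The sample scaling-rotation mean set. -/
def sampleESR (k : ℝ) (X : Fin n → Matrix (Fin p) (Fin p) ℝ) :
    Set (Matrix (Fin p) (Fin p) ℝ) :=
  {S | IsSPD S ∧ ∀ S' : Matrix (Fin p) (Fin p) ℝ, IsSPD S' →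
    ∑ i, (dSR k (X i) S) ^ 2 ≤ ∑ i, (dSR k (X i) S') ^ 2}

/-- The sample partial scaling-rotation mean set. -/
def sampleEPSR (k : ℝ) (X : Fin n → Matrix (Fin p) (Fin p) ℝ) :
    Set (Matrix (Fin p) (Fin p) ℝ × Matrix (Fin p) (Fin p) ℝ) :=
  {m | IsM m ∧ ∀ m' : Matrix (Fin p) (Fin p) ℝ × Matrix (Fin p) (Fin p) ℝ, IsM m' →
    ∑ i, (dPSR k (X i) m) ^ 2 ≤ ∑ i, (dPSR k (X i) m') ^ 2}

/-! ### Auxiliary lemmas -/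

/-- Signed permutation matrix associated to `(π, ε)`. -/
noncomputable def spm (π : Equiv.Perm (Fin p)) (ε : Fin p → ℝ) : Matrix (Fin p) (Fin p) ℝ :=
  Matrix.of fun i j => ε i * (if i = π j then 1 else 0)

lemma spm_apply (π : Equiv.Perm (Fin p)) (ε : Fin p → ℝ) (i j : Fin p) :
    spm π ε i j = ε i * (if i = π j then 1 else 0) := rfl

lemma spm_transpose_mul (π : Equiv.Perm (Fin p)) (ε : Fin p → ℝ)
    (hε : ∀ i, ε i = 1 ∨ ε i = -1) : (spm π ε)ᵀ * spm π ε = 1 := by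
  have hsq : ∀ a, ε a * ε a = 1 := fun a => by rcases hε a with h | h <;> rw [h] <;> norm_num
  ext j j'
  rw [Matrix.mul_apply]
  rw [Fintype.sum_eq_single (π j) (fun i hi => by
    simp [spm_apply, Matrix.transpose_apply, hi])]
  by_cases h : j = j'
  · subst h
    simp [spm_apply, Matrix.one_apply, hsq]
  · have : π j ≠ π j' := fun hc => h (π.injective hc)
    simp [spm_apply, Matrix.one_apply, h, this]

lemma spm_mul_transpose (π : Equiv.Perm (Fin p)) (ε : Fin p → ℝ)
    (hε : ∀ i, ε i = 1 ∨ ε i = -1) : spm π ε * (spm π ε)ᵀ = 1 :=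
  mul_eq_one_comm.mp (spm_transpose_mul π ε hε)

lemma spm_conj_apply (π : Equiv.Perm (Fin p)) (ε : Fin p → ℝ)
    (hε : ∀ i, ε i = 1 ∨ ε i = -1) {D : Matrix (Fin p) (Fin p) ℝ} (hD : D.IsDiag)
    (i j : Fin p) :
    ((spm π ε)ᵀ * D * spm π ε) i j = if i = j then D (π i) (π i) else 0 := by
  have hsq : ∀ a, ε a * ε a = 1 := fun a => by rcases hε a with h | h <;> rw [h] <;> norm_num
  rw [Matrix.mul_apply]
  rw [Fintype.sum_eq_single (π j) (fun b hb => by simp [spm_apply, hb])]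
  rw [Matrix.mul_apply]
  rw [Fintype.sum_eq_single (π i) (fun a ha => by
    simp [spm_apply, Matrix.transpose_apply, ha])]
  simp only [spm_apply, Matrix.transpose_apply, Matrix.of_apply]
  simp only [if_true]
  by_cases h : i = j
  · subst h
    rw [if_pos rfl]
    linear_combination (D (π i) (π i)) * hsq (π i)
  · have hne : π i ≠ π j := fun hc => h (π.injective hc)
    rw [hD hne, if_neg h]
    ring

lemma eigendecomp_unique {S : Matrix (Fin p) (Fin p) ℝ}
    {m₁ m₂ : Matrix (Fin p) (Fin p) ℝ × Matrix (Fin p) (Fin p) ℝ}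
    (h₁ : IsEigenDecomp S m₁) (h₂ : IsEigenDecomp S m₂)
    (hdist : Function.Injective fun i => m₁.2 i i) :
    ∃ (π : Equiv.Perm (Fin p)) (ε : Fin p → ℝ), (∀ i, ε i = 1 ∨ ε i = -1) ∧
      m₂.1 = m₁.1 * spm π ε ∧ m₂.2 = (spm π ε)ᵀ * m₁.2 * spm π ε := by
  obtain ⟨U₁, D₁⟩ := m₁
  obtain ⟨U₂, D₂⟩ := m₂
  obtain ⟨⟨⟨hU₁, hdet₁⟩, hD₁, hD₁pos⟩, hF₁⟩ := h₁
  obtain ⟨⟨⟨hU₂, hdet₂⟩, hD₂, hD₂pos⟩, hF₂⟩ := h₂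
  simp only [Fmap] at hF₁ hF₂
  simp only at hU₁ hU₂ hD₁ hD₂ hD₁pos hD₂pos hdist ⊢
  have hU₁' : U₁ᵀ * U₁ = 1 := mul_eq_one_comm.mp hU₁
  have hU₂' : U₂ᵀ * U₂ = 1 := mul_eq_one_comm.mp hU₂
  set h : Matrix (Fin p) (Fin p) ℝ := U₁ᵀ * U₂ with hh
  have horth : hᵀ * h = 1 := by
    rw [hh, Matrix.transpose_mul, Matrix.transpose_transpose, Matrix.mul_assoc,
      ← Matrix.mul_assoc U₁ U₁ᵀ U₂, hU₁, Matrix.one_mul, hU₂']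
  have l : U₁ᵀ * (U₁ * D₁ * U₁ᵀ) * U₂ = D₁ * h := by
    rw [Matrix.mul_assoc U₁ D₁, ← Matrix.mul_assoc U₁ᵀ U₁, hU₁', Matrix.one_mul,
      Matrix.mul_assoc, hh]
  have r : U₁ᵀ * (U₂ * D₂ * U₂ᵀ) * U₂ = h * D₂ := by
    rw [Matrix.mul_assoc U₂ D₂, ← Matrix.mul_assoc U₁ᵀ U₂, Matrix.mul_assoc (U₁ᵀ * U₂),
      Matrix.mul_assoc D₂, hU₂', Matrix.mul_one, hh]
  have key : D₁ * h = h * D₂ := by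
    rw [← l, ← r, hF₁.trans hF₂.symm]
  have hentry : ∀ i j, D₁ i i * h i j = h i j * D₂ j j := by
    intro i j
    have := congrFun (congrFun key i) j
    rw [Matrix.mul_apply, Matrix.mul_apply] at this
    rw [Fintype.sum_eq_single i (fun a ha => by rw [hD₁ (Ne.symm ha), zero_mul])] at this
    rw [Fintype.sum_eq_single j (fun b hb => by rw [hD₂ hb, mul_zero])] at this
    exact this
  have hcolsum : ∀ j, ∑ i, h i j * h i j = 1 := by
    intro j
    have := congrFun (congrFun horth j) j
    rw [Matrix.mul_apply] at this
    simpa [Matrix.transpose_apply, Matrix.one_apply] using this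
  have hexists : ∀ j, ∃ i, h i j ≠ 0 := by
    intro j
    by_contra hc
    push_neg at hc
    have := hcolsum j
    simp only [hc, mul_zero, Finset.sum_const_zero] at this
    exact zero_ne_one this
  choose π0 hπ0 using hexists
  have heig : ∀ j i, h i j ≠ 0 → D₁ i i = D₂ j j := by
    intro j i hi
    have := hentry i j
    rw [mul_comm (h i j) (D₂ j j)] at this
    exact mul_right_cancel₀ hi this
  have huniq : ∀ j i, h i j ≠ 0 → i = π0 j := by
    intro j i hi
    exact hdist (((heig j i hi).trans (heig j (π0 j) (hπ0 j)).symm))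
  have hzero : ∀ j i, i ≠ π0 j → h i j = 0 := by
    intro j i hi
    by_contra hc
    exact hi (huniq j i hc)
  have hπinj : Function.Injective π0 := by
    intro j j' hjj
    by_contra hne
    have := congrFun (congrFun horth j) j'
    rw [Matrix.mul_apply] at this
    rw [Fintype.sum_eq_single (π0 j) (fun a ha => by
      rw [Matrix.transpose_apply, hzero j a ha, zero_mul])] at this
    rw [Matrix.one_apply, if_neg hne] at this
    rw [Matrix.transpose_apply] at this
    have h2 : h (π0 j) j' ≠ 0 := by rw [hjj]; exact hπ0 j'
    exact (mul_ne_zero (hπ0 j) h2) this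
  let π : Equiv.Perm (Fin p) := Equiv.ofBijective π0 (Finite.injective_iff_bijective.mp hπinj)
  have hπ : ∀ j, π j = π0 j := fun j => rfl
  set ε : Fin p → ℝ := fun i => h i (π.symm i) with hεdef
  have hcol1 : ∀ j, h (π0 j) j * h (π0 j) j = 1 := by
    intro j
    have := hcolsum j
    rw [Fintype.sum_eq_single (π0 j) (fun a ha => by rw [hzero j a ha, zero_mul])] at this
    exact this
  have hε : ∀ i, ε i = 1 ∨ ε i = -1 := by
    intro i
    have h1 : π0 (π.symm i) = i := π.apply_symm_apply i
    have := hcol1 (π.symm i)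
    rw [h1] at this
    exact mul_self_eq_one_iff.mp this
  have hspm : h = spm π ε := by
    ext i j
    rw [spm_apply]
    by_cases hij : i = π j
    · rw [if_pos hij, mul_one, hεdef]
      have h2 : π.symm i = j := by rw [hij, π.symm_apply_apply]
      show h i j = h i (π.symm i)
      rw [h2]
    · rw [if_neg hij, mul_zero]
      exact hzero j i (by rwa [← hπ])
  refine ⟨π, ε, hε, ?_, ?_⟩
  · rw [← hspm, hh, ← Matrix.mul_assoc, hU₁, Matrix.one_mul]
  · rw [← hspm, Matrix.mul_assoc, key, ← Matrix.mul_assoc, horth, Matrix.one_mul]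

lemma dSO_congr {U₁ U₂ V₁ V₂ : Matrix (Fin p) (Fin p) ℝ}
    (h : U₂ * U₁ᵀ = V₂ * V₁ᵀ) : dSO U₁ U₂ = dSO V₁ V₂ := by
  unfold dSO
  rw [h]

lemma dDiag_conj (π : Equiv.Perm (Fin p)) (ε : Fin p → ℝ)
    (hε : ∀ i, ε i = 1 ∨ ε i = -1) {E₁ E₂ : Matrix (Fin p) (Fin p) ℝ}
    (h₁ : E₁.IsDiag) (h₂ : E₂.IsDiag) :
    dDiag ((spm π ε)ᵀ * E₁ * spm π ε) ((spm π ε)ᵀ * E₂ * spm π ε) = dDiag E₁ E₂ := by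
  unfold dDiag
  congr 1
  have : ∀ i : Fin p,
      (Real.log (((spm π ε)ᵀ * E₁ * spm π ε) i i) - Real.log (((spm π ε)ᵀ * E₂ * spm π ε) i i)) ^ 2
      = (Real.log (E₁ (π i) (π i)) - Real.log (E₂ (π i) (π i))) ^ 2 := by
    intro i
    rw [spm_conj_apply π ε hε h₁ i i, spm_conj_apply π ε hε h₂ i i, if_pos rfl, if_pos rfl]
  rw [Finset.sum_congr rfl (fun i _ => this i)]
  exact Equiv.sum_comp π (fun a => (Real.log (E₁ a a) - Real.log (E₂ a a)) ^ 2)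

lemma spm_conj_isDiagPos (π : Equiv.Perm (Fin p)) (ε : Fin p → ℝ)
    (hε : ∀ i, ε i = 1 ∨ ε i = -1) {E : Matrix (Fin p) (Fin p) ℝ}
    (hE : IsDiagPos E) : IsDiagPos ((spm π ε)ᵀ * E * spm π ε) := by
  constructor
  · intro i j hij
    rw [spm_conj_apply π ε hε hE.1 i j, if_neg hij]
  · intro i
    rw [spm_conj_apply π ε hε hE.1 i i, if_pos rfl]
    exact hE.2 (π i)

lemma exists_eigendecomp {X : Matrix (Fin p) (Fin p) ℝ} (hX : IsSPD X) :
    ∃ m, IsEigenDecomp X m := by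
  have hP : X.PosDef := hX.2
  have hH : X.IsHermitian := hP.1
  set U : Matrix (Fin p) (Fin p) ℝ := (hH.eigenvectorUnitary : Matrix (Fin p) (Fin p) ℝ) with hUdef
  have hUU : U * Uᵀ = 1 := by
    have := (Matrix.mem_unitaryGroup_iff).mp hH.eigenvectorUnitary.2
    rw [Matrix.star_eq_conjTranspose] at this
    exact this
  have hspec : X = U * Matrix.diagonal hH.eigenvalues * Uᵀ := by
    have := hH.spectral_theorem
    have h2 : (RCLike.ofReal ∘ hH.eigenvalues : Fin p → ℝ) = hH.eigenvalues := by
      funext i; simp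
    rw [h2] at this
    exact this
  have hDpos : IsDiagPos (Matrix.diagonal hH.eigenvalues) := by
    refine ⟨Matrix.isDiag_diagonal _, fun i => ?_⟩
    rw [Matrix.diagonal_apply_eq]
    exact hP.eigenvalues_pos i
  have hdet2 : U.det = 1 ∨ U.det = -1 := by
    apply mul_self_eq_one_iff.mp
    have h := congrArg Matrix.det hUU
    rw [Matrix.det_mul, Matrix.det_transpose, Matrix.det_one] at h
    exact h
  rcases hdet2 with hdet | hdet
  · exact ⟨(U, Matrix.diagonal hH.eigenvalues), ⟨⟨hUU, hdet⟩, hDpos⟩, hspec.symm⟩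
  · have hne : Nonempty (Fin p) := by
      rcases isEmpty_or_nonempty (Fin p) with he | hne
      · rw [Matrix.det_isEmpty] at hdet; norm_num at hdet
      · exact hne
    obtain ⟨i₀⟩ := hne
    set J : Matrix (Fin p) (Fin p) ℝ := Matrix.diagonal (fun i => if i = i₀ then (-1 : ℝ) else 1)
      with hJdef
    have hJT : Jᵀ = J := Matrix.diagonal_transpose _
    have hJJ : J * J = 1 := by
      rw [hJdef, Matrix.diagonal_mul_diagonal]
      have hfun : (fun i => (if i = i₀ then (-1 : ℝ) else 1) * (if i = i₀ then (-1 : ℝ) else 1))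
          = fun _ => (1 : ℝ) := by
        funext i; by_cases hi : i = i₀ <;> simp [hi]
      rw [hfun, Matrix.diagonal_one]
    have hJdet : J.det = -1 := by
      rw [hJdef, Matrix.det_diagonal]
      rw [Finset.prod_eq_single i₀ (fun b _ hb => by rw [if_neg hb]) (by simp)]
      rw [if_pos rfl]
    refine ⟨(U * J, Matrix.diagonal hH.eigenvalues), ⟨⟨?_, ?_⟩, hDpos⟩, ?_⟩
    · show U * J * (U * J)ᵀ = 1
      rw [Matrix.transpose_mul, hJT, ← Matrix.mul_assoc, Matrix.mul_assoc U J J, hJJ,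
        Matrix.mul_one, hUU]
    · show (U * J).det = 1
      rw [Matrix.det_mul, hdet, hJdet]; norm_num
    · show U * J * Matrix.diagonal hH.eigenvalues * (U * J)ᵀ = X
      rw [Matrix.transpose_mul, hJT]
      have hJD : J * Matrix.diagonal hH.eigenvalues * J = Matrix.diagonal hH.eigenvalues := by
        rw [hJdef, Matrix.diagonal_mul_diagonal, Matrix.diagonal_mul_diagonal]
        have hfun : (fun i => (if i = i₀ then (-1 : ℝ) else 1) * hH.eigenvalues i
            * (if i = i₀ then (-1 : ℝ) else 1)) = hH.eigenvalues := by
          funext i; by_cases hi : i = i₀ <;> simp [hi]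
        rw [hfun]
      calc U * J * Matrix.diagonal hH.eigenvalues * (J * Uᵀ)
          = U * (J * Matrix.diagonal hH.eigenvalues * J) * Uᵀ := by
            rw [Matrix.mul_assoc U J, Matrix.mul_assoc U, Matrix.mul_assoc U,
              Matrix.mul_assoc (J * Matrix.diagonal hH.eigenvalues), Matrix.mul_assoc J]
        _ = X := by rw [hJD, ← hspec]

lemma Fmap_isSPD {m : Matrix (Fin p) (Fin p) ℝ × Matrix (Fin p) (Fin p) ℝ}
    (hm : IsM m) : IsSPD (Fmap m) := by
  obtain ⟨⟨hU, hdet⟩, hD, hDpos⟩ := hm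
  have hDsymm : m.2ᵀ = m.2 := by
    ext i j
    rw [Matrix.transpose_apply]
    by_cases hij : i = j
    · rw [hij]
    · rw [hD hij, hD (fun hc => hij hc.symm)]
  have hUU' : m.1ᵀ * m.1 = 1 := mul_eq_one_comm.mp hU
  have hsymm : (Fmap m).IsSymm := by
    show (m.1 * m.2 * m.1ᵀ)ᵀ = m.1 * m.2 * m.1ᵀ
    rw [Matrix.transpose_mul, Matrix.transpose_mul, Matrix.transpose_transpose, hDsymm,
      Matrix.mul_assoc]
  refine ⟨hsymm, Matrix.posDef_iff_dotProduct_mulVec.mpr ⟨hsymm, ?_⟩⟩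
  intro x hx
  have hy : m.1ᵀ *ᵥ x ≠ 0 := by
    intro hc
    apply hx
    have : m.1 *ᵥ (m.1ᵀ *ᵥ x) = x := by
      rw [Matrix.mulVec_mulVec, hU, Matrix.one_mulVec]
    rw [hc, Matrix.mulVec_zero] at this
    exact this.symm
  have hDpd : m.2.PosDef := by
    have : m.2 = Matrix.diagonal m.2.diag := hD.diagonal_diag.symm
    rw [this]
    exact Matrix.posDef_diagonal_iff.mpr (fun i => hDpos i)
  have := hDpd.dotProduct_mulVec_pos hy
  calc (0 : ℝ) < star (m.1ᵀ *ᵥ x) ⬝ᵥ (m.2 *ᵥ (m.1ᵀ *ᵥ x)) := this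
    _ = star x ⬝ᵥ (Fmap m *ᵥ x) := by
        show (m.1ᵀ *ᵥ x) ⬝ᵥ (m.2 *ᵥ (m.1ᵀ *ᵥ x)) = x ⬝ᵥ (Fmap m *ᵥ x)
        have hF : Fmap m = m.1 * (m.2 * m.1ᵀ) := by
          show m.1 * m.2 * m.1ᵀ = _
          rw [Matrix.mul_assoc]
        rw [hF]
        conv_rhs => rw [← Matrix.mulVec_mulVec, Matrix.dotProduct_mulVec,
          ← Matrix.mulVec_transpose, ← Matrix.mulVec_mulVec]

lemma dPSR_set_nonempty (k : ℝ) {X : Matrix (Fin p) (Fin p) ℝ} (hX : IsSPD X)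
    (m : Matrix (Fin p) (Fin p) ℝ × Matrix (Fin p) (Fin p) ℝ) :
    {x : ℝ | ∃ mX, IsEigenDecomp X mX ∧ x = dM k mX m}.Nonempty := by
  obtain ⟨mX, hmX⟩ := exists_eigendecomp hX
  exact ⟨dM k mX m, mX, hmX, rfl⟩

lemma dPSR_set_bddBelow (k : ℝ) (X : Matrix (Fin p) (Fin p) ℝ)
    (m : Matrix (Fin p) (Fin p) ℝ × Matrix (Fin p) (Fin p) ℝ) :
    BddBelow {x : ℝ | ∃ mX, IsEigenDecomp X mX ∧ x = dM k mX m} := by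
  refine ⟨0, fun x hx => ?_⟩
  obtain ⟨mX, _, rfl⟩ := hx
  exact Real.sqrt_nonneg _

lemma dSR_set_bddBelow (k : ℝ) (X Y : Matrix (Fin p) (Fin p) ℝ) :
    BddBelow {x : ℝ | ∃ mX mY, IsEigenDecomp X mX ∧ IsEigenDecomp Y mY ∧ x = dM k mX mY} := by
  refine ⟨0, fun x hx => ?_⟩
  obtain ⟨mX, mY, _, _, rfl⟩ := hx
  exact Real.sqrt_nonneg _

lemma dPSR_nonneg (k : ℝ) {X : Matrix (Fin p) (Fin p) ℝ} (hX : IsSPD X)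
    (m : Matrix (Fin p) (Fin p) ℝ × Matrix (Fin p) (Fin p) ℝ) :
    0 ≤ dPSR k X m := by
  unfold dPSR
  apply le_csInf (dPSR_set_nonempty k hX m)
  rintro x ⟨mX, _, rfl⟩
  exact Real.sqrt_nonneg _

lemma dSR_nonneg (k : ℝ) {X Y : Matrix (Fin p) (Fin p) ℝ} (hX : IsSPD X) (hY : IsSPD Y) :
    0 ≤ dSR k X Y := by
  obtain ⟨mX, hmX⟩ := exists_eigendecomp hX
  obtain ⟨mY, hmY⟩ := exists_eigendecomp hY
  unfold dSR
  refine le_csInf ?_ ?_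
  · exact ⟨dM k mX mY, mX, mY, hmX, hmY, rfl⟩
  · rintro x ⟨mX, mY, _, _, rfl⟩
    exact Real.sqrt_nonneg _

lemma dSR_le_dPSR (k : ℝ) {X : Matrix (Fin p) (Fin p) ℝ} (hX : IsSPD X)
    {m : Matrix (Fin p) (Fin p) ℝ × Matrix (Fin p) (Fin p) ℝ} (hm : IsM m) :
    dSR k X (Fmap m) ≤ dPSR k X m := by
  apply csInf_le_csInf (dSR_set_bddBelow k X (Fmap m)) (dPSR_set_nonempty k hX m)
  rintro x ⟨mX, hmX, rfl⟩
  exact ⟨mX, m, hmX, ⟨hm, rfl⟩, rfl⟩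

lemma dPSR_eq_dSR (k : ℝ) {X : Matrix (Fin p) (Fin p) ℝ} (hX : IsSPD X)
    {m : Matrix (Fin p) (Fin p) ℝ × Matrix (Fin p) (Fin p) ℝ} (hm : IsM m)
    (hd : HasDistinctEigs (Fmap m)) : dPSR k X m = dSR k X (Fmap m) := by
  obtain ⟨m₀, hm₀, hm₀inj⟩ := hd
  -- the diagonal part of `m` has distinct entries
  have hminj : Function.Injective fun i => m.2 i i := by
    obtain ⟨π, ε, hε, hU, hD⟩ := eigendecomp_unique hm₀ ⟨hm, rfl⟩ hm₀inj
    have hdiag : ∀ i, m.2 i i = m₀.2 (π i) (π i) := by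
      intro i
      rw [hD, spm_conj_apply π ε hε hm₀.1.2.1 i i, if_pos rfl]
    intro i j hij
    simp only [hdiag] at hij
    exact π.injective (hm₀inj hij)
  refine le_antisymm ?_ (dSR_le_dPSR k hX hm)
  obtain ⟨mX₀, hmX₀⟩ := exists_eigendecomp hX
  unfold dSR
  refine le_csInf ?_ ?_
  · exact ⟨dM k mX₀ m, mX₀, m, hmX₀, ⟨hm, rfl⟩, rfl⟩
  rintro x ⟨mX, mS, hmX, hmS, rfl⟩
  obtain ⟨π, ε, hε, hU, hD⟩ := eigendecomp_unique ⟨hm, rfl⟩ hmS hminj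
  set P := spm π ε with hPdef
  have hPo : Pᵀ * P = 1 := spm_transpose_mul π ε hε
  have hPo' : P * Pᵀ = 1 := spm_mul_transpose π ε hε
  have hPdet : P.det = 1 := by
    have := congrArg Matrix.det hU
    rw [Matrix.det_mul, hmS.1.1.2, hm.1.2, one_mul] at this
    exact this.symm
  have hcanc1 : ∀ Z : Matrix (Fin p) (Fin p) ℝ, Pᵀ * (P * Z) = Z := fun Z => by
    rw [← Matrix.mul_assoc, hPo, Matrix.one_mul]
  have hcanc2 : ∀ Z : Matrix (Fin p) (Fin p) ℝ, P * (Pᵀ * Z) = Z := fun Z => by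
    rw [← Matrix.mul_assoc, hPo', Matrix.one_mul]
  -- transported eigen-decomposition of X
  set mX' : Matrix (Fin p) (Fin p) ℝ × Matrix (Fin p) (Fin p) ℝ
    := (mX.1 * Pᵀ, P * mX.2 * Pᵀ) with hmX'def
  have hPtspm : Pᵀ = spm π⁻¹ (fun i => ε (π i)) := by
    ext i j
    show P j i = spm π⁻¹ (fun i => ε (π i)) i j
    rw [hPdef, spm_apply, spm_apply]
    by_cases hji : j = π i
    · have h2 : i = π⁻¹ j := by rw [hji]; simp
      rw [if_pos hji, if_pos h2, hji]
    · have h2 : ¬ i = π⁻¹ j := fun hc => hji (by rw [hc]; simp)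
      rw [if_neg hji, if_neg h2, mul_zero, mul_zero]
  have hε' : ∀ i, ε (π i) = 1 ∨ ε (π i) = -1 := fun i => hε (π i)
  have hmX'2 : mX'.2 = (spm π⁻¹ (fun i => ε (π i)))ᵀ * mX.2 * spm π⁻¹ (fun i => ε (π i)) := by
    show P * mX.2 * Pᵀ = _
    rw [← hPtspm, Matrix.transpose_transpose]
  have hmX'diag : IsDiagPos mX'.2 := by
    rw [hmX'2]
    exact spm_conj_isDiagPos π⁻¹ _ hε' hmX.1.2
  have hmX'ED : IsEigenDecomp X mX' := by
    refine ⟨⟨⟨?_, ?_⟩, hmX'diag⟩, ?_⟩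
    · show mX.1 * Pᵀ * (mX.1 * Pᵀ)ᵀ = 1
      simp only [Matrix.transpose_mul, Matrix.transpose_transpose, Matrix.mul_assoc, hcanc1]
      exact hmX.1.1.1
    · show (mX.1 * Pᵀ).det = 1
      rw [Matrix.det_mul, Matrix.det_transpose, hPdet, hmX.1.1.2, one_mul]
    · show mX.1 * Pᵀ * (P * mX.2 * Pᵀ) * (mX.1 * Pᵀ)ᵀ = X
      simp only [Matrix.transpose_mul, Matrix.transpose_transpose, Matrix.mul_assoc,
        hcanc1, hcanc2]
      have : mX.1 * mX.2 * mX.1ᵀ = X := hmX.2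
      rw [Matrix.mul_assoc] at this
      exact this
  have hdSOeq : dSO mX'.1 m.1 = dSO mX.1 mS.1 := by
    apply dSO_congr
    show m.1 * (mX.1 * Pᵀ)ᵀ = mS.1 * mX.1ᵀ
    rw [Matrix.transpose_mul, Matrix.transpose_transpose, hU, ← Matrix.mul_assoc]
  have hdMeq : dM k mX' m = dM k mX mS := by
    have hdd : dDiag mX'.2 m.2 = dDiag mX.2 mS.2 := by
      have h1 : mX.2 = Pᵀ * mX'.2 * P := by
        show mX.2 = Pᵀ * (P * mX.2 * Pᵀ) * P
        simp only [Matrix.mul_assoc, hcanc1, hPo, Matrix.mul_one]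
      rw [h1, hD]
      exact (dDiag_conj π ε hε hmX'diag.1 hm.2.1).symm
    unfold dM
    rw [hdSOeq, hdd]
  rw [← hdMeq]
  exact csInf_le (dPSR_set_bddBelow k X m) ⟨mX', hmX'ED, rfl⟩

/-- if the sample SR mean set is nonempty and contained in the top
stratum, then the sample PSR mean set is exactly `F⁻¹(E_SR)` (within `M(p)`), and
`F(E_PSR) = E_SR`. -/
theorem PSR_eq_SR (p : ℕ) (k : ℝ) (hk : 0 < k) (n : ℕ)
    (X : Fin n → Matrix (Fin p) (Fin p) ℝ) (hX : ∀ i, IsSPD (X i))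
    (hne : (sampleESR k X).Nonempty)
    (htop : ∀ S ∈ sampleESR k X, HasDistinctEigs S) :
    sampleEPSR k X = {m | IsM m ∧ Fmap m ∈ sampleESR k X} ∧
      Fmap '' sampleEPSR k X = sampleESR k X := by
  obtain ⟨S₀, hS₀⟩ := hne
  obtain ⟨m₀, hm₀ED, hm₀inj⟩ := htop S₀ hS₀
  have hm₀M : IsM m₀ := hm₀ED.1
  have hFm₀ : Fmap m₀ = S₀ := hm₀ED.2
  have hm₀eq : ∀ i, dPSR k (X i) m₀ = dSR k (X i) S₀ := by
    intro i
    rw [← hFm₀]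
    exact dPSR_eq_dSR k (hX i) hm₀M (by rw [hFm₀]; exact htop S₀ hS₀)
  have hfwd : ∀ m ∈ sampleEPSR k X, IsM m ∧ Fmap m ∈ sampleESR k X := by
    intro m hmem
    obtain ⟨hmM, hmin⟩ := hmem
    refine ⟨hmM, Fmap_isSPD hmM, ?_⟩
    intro S' hS'
    have c1 : ∀ i, (dSR k (X i) (Fmap m)) ^ 2 ≤ (dPSR k (X i) m) ^ 2 := fun i =>
      pow_le_pow_left₀ (dSR_nonneg k (hX i) (Fmap_isSPD hmM)) (dSR_le_dPSR k (hX i) hmM) 2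
    calc ∑ i, (dSR k (X i) (Fmap m)) ^ 2
        ≤ ∑ i, (dPSR k (X i) m) ^ 2 := Finset.sum_le_sum (fun i _ => c1 i)
      _ ≤ ∑ i, (dPSR k (X i) m₀) ^ 2 := hmin m₀ hm₀M
      _ = ∑ i, (dSR k (X i) S₀) ^ 2 := by simp_rw [hm₀eq]
      _ ≤ ∑ i, (dSR k (X i) S') ^ 2 := hS₀.2 S' hS'
  have hbwd : ∀ m, IsM m → Fmap m ∈ sampleESR k X → m ∈ sampleEPSR k X := by
    intro m hmM hmem
    refine ⟨hmM, ?_⟩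
    intro m' hm'
    have heqm : ∀ i, dPSR k (X i) m = dSR k (X i) (Fmap m) := fun i =>
      dPSR_eq_dSR k (hX i) hmM (htop _ hmem)
    have c2 : ∀ i, (dSR k (X i) (Fmap m')) ^ 2 ≤ (dPSR k (X i) m') ^ 2 := fun i =>
      pow_le_pow_left₀ (dSR_nonneg k (hX i) (Fmap_isSPD hm')) (dSR_le_dPSR k (hX i) hm') 2
    calc ∑ i, (dPSR k (X i) m) ^ 2
        = ∑ i, (dSR k (X i) (Fmap m)) ^ 2 := by simp_rw [heqm]
      _ ≤ ∑ i, (dSR k (X i) (Fmap m')) ^ 2 := hmem.2 _ (Fmap_isSPD hm')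
      _ ≤ ∑ i, (dPSR k (X i) m') ^ 2 := Finset.sum_le_sum (fun i _ => c2 i)
  constructor
  · ext m
    exact ⟨fun h => hfwd m h, fun h => hbwd m h.1 h.2⟩
  · ext S
    constructor
    · rintro ⟨m, hm, rfl⟩
      exact (hfwd m hm).2
    · intro hS
      obtain ⟨m, hmED, _⟩ := htop S hS
      exact ⟨m, hbwd m hmED.1 (by rw [hmED.2]; exact hS), hmED.2⟩

end SR
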